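/- Let Z be a metric measure space, 1 ≤ p < ∞, and let V_n denote ℝⁿ with the supremum norm with standard basis e₁,…,e_n. If u = Σ_{i=1}^n u_i e_i with u_i ∈ W^{1,p}(Z) for each i, then u ∈ W^{1,p}(Z; V_n) and its minimal p-weak upper gradient satisfies ρ_u = sup_{1 ≤ i ≤ n} ρ_{u_i} almost everywhere. -/

import Mathlib

open MeasureTheory Metric
open scoped ENNReal NNReal

/-- A path of speed at most `1` (unit-speed parametrization) defined on `[a,b]`.
Every rectifiable path arises this way after arclength reparametrization, and path
integrals are computed along such parametrizations. -/
structure UnitSpeedPath (Z : Type*) [MetricSpace Z] where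
  a : ℝ
  b : ℝ
  hab : a ≤ b
  toFun : ℝ → Z
  lip : LipschitzOnWith 1 toFun (Set.Icc a b)

/-- The path integral `∫_γ ρ ds` of a nonnegative function along a unit-speed path. -/
noncomputable def UnitSpeedPath.integral {Z : Type*} [MetricSpace Z]
    (γ : UnitSpeedPath Z) (ρ : Z → ℝ) : ℝ≥0∞ :=
  ∫⁻ t in Set.Icc γ.a γ.b, ENNReal.ofReal (ρ (γ.toFun t))

/-- A family `Γ` of paths is `p`-negligible if some nonnegative Borel `ρ ∈ L^p(μ)`
has infinite path integral along every path of `Γ`. -/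
def PNegligible {Z : Type*} [MetricSpace Z] [MeasurableSpace Z]
    (μ : MeasureTheory.Measure Z) (p : ℝ≥0∞) (Γ : Set (UnitSpeedPath Z)) : Prop :=
  ∃ ρ : Z → ℝ, Measurable ρ ∧ (∀ z, 0 ≤ ρ z) ∧ MeasureTheory.MemLp ρ p μ ∧
    ∀ γ ∈ Γ, γ.integral ρ = ∞

/-- `ρ` is a `p`-weak upper gradient of `u : Z → V`: `ρ` is a nonnegative Borel
function and, for `p`-almost every path `γ : [a,b] → Z`,
`‖u (γ a) − u (γ b)‖ ≤ ∫_γ ρ ds`. -/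
def IsWeakUpperGradient {Z V : Type*} [MetricSpace Z] [MeasurableSpace Z]
    [NormedAddCommGroup V] (μ : MeasureTheory.Measure Z) (p : ℝ≥0∞)
    (u : Z → V) (ρ : Z → ℝ) : Prop :=
  Measurable ρ ∧ (∀ z, 0 ≤ ρ z) ∧
    PNegligible μ p {γ : UnitSpeedPath Z |
      ¬ ENNReal.ofReal ‖u (γ.toFun γ.a) - u (γ.toFun γ.b)‖ ≤ γ.integral ρ}

/-- `ρ` is a minimal `p`-weak upper gradient of `u`: an `L^p`-integrable `p`-weak
upper gradient which is `μ`-a.e. dominated by every other `L^p`-integrable `p`-weak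
upper gradient of `u`. -/
def IsMinimalWeakUpperGradient {Z V : Type*} [MetricSpace Z] [MeasurableSpace Z]
    [NormedAddCommGroup V] (μ : MeasureTheory.Measure Z) (p : ℝ≥0∞)
    (u : Z → V) (ρ : Z → ℝ) : Prop :=
  IsWeakUpperGradient μ p u ρ ∧ MeasureTheory.MemLp ρ p μ ∧
    ∀ σ : Z → ℝ, IsWeakUpperGradient μ p u σ → MeasureTheory.MemLp σ p μ →
      ∀ᵐ z ∂μ, ρ z ≤ σ z


private lemma usp_integral_mono {Z : Type*} [MetricSpace Z] (γ : UnitSpeedPath Z)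
    {ρ σ : Z → ℝ} (h : ∀ z, ρ z ≤ σ z) : γ.integral ρ ≤ γ.integral σ :=
  MeasureTheory.lintegral_mono fun t => ENNReal.ofReal_le_ofReal (h _)

private lemma pneg_mono {Z : Type*} [MetricSpace Z] [MeasurableSpace Z]
    {μ : Measure Z} {p : ℝ≥0∞} {Γ Γ' : Set (UnitSpeedPath Z)}
    (hsub : Γ ⊆ Γ') (h : PNegligible μ p Γ') : PNegligible μ p Γ := by
  obtain ⟨ρ, h1, h2, h3, h4⟩ := h
  exact ⟨ρ, h1, h2, h3, fun γ hγ => h4 γ (hsub hγ)⟩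

private lemma pneg_iUnion {Z : Type*} [MetricSpace Z] [MeasurableSpace Z]
    {μ : Measure Z} {p : ℝ≥0∞} {n : ℕ} {Γ : Fin n → Set (UnitSpeedPath Z)}
    (h : ∀ i, PNegligible μ p (Γ i)) : PNegligible μ p (⋃ i, Γ i) := by
  choose ρs h1 h2 h3 h4 using h
  refine ⟨fun z => ∑ i, ρs i z, by measurability, fun z => Finset.sum_nonneg fun i _ => h2 i z,
    memLp_finset_sum _ fun i _ => h3 i, fun γ hγ => ?_⟩
  obtain ⟨i, hi⟩ := Set.mem_iUnion.1 hγ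
  have hmono : γ.integral (ρs i) ≤ γ.integral (fun z => ∑ j, ρs j z) :=
    usp_integral_mono γ fun z =>
      Finset.single_le_sum (fun j _ => h2 j z) (Finset.mem_univ i)
  rw [h4 i γ hi] at hmono
  exact top_le_iff.1 hmono

/-- **Part of Lemma 4.6.** Let `V_n = ℝⁿ` with the supremum norm (the `Pi` norm on
`Fin n → ℝ`). If `u = Σ uᵢ eᵢ` with each `uᵢ ∈ W^{1,p}(Z)` (i.e. `uᵢ ∈ L^p` with a
minimal `p`-weak upper gradient `ρᵢ`), then `u ∈ W^{1,p}(Z; V_n)` and its minimal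
`p`-weak upper gradient equals `supᵢ ρᵢ` almost everywhere. -/
theorem stmt_9 {Z : Type*} [MetricSpace Z] [MeasurableSpace Z] [BorelSpace Z]
    (μ : Measure Z) (p : ℝ≥0∞) (hp : 1 ≤ p) (hp' : p ≠ ⊤)
    (n : ℕ) (u : Fin n → Z → ℝ) (hu : ∀ i, MemLp (u i) p μ)
    (ρ : Fin n → Z → ℝ)
    (hρ : ∀ i, IsMinimalWeakUpperGradient μ p (u i) (ρ i)) :
    MemLp (fun z => (fun i => u i z : Fin n → ℝ)) p μ ∧
      ∃ ρu : Z → ℝ,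
        IsMinimalWeakUpperGradient μ p (fun z => (fun i => u i z : Fin n → ℝ)) ρu ∧
        ρu =ᵐ[μ] fun z => ⨆ i, ρ i z := by
  classical
  set v : Z → (Fin n → ℝ) := fun z => (fun i => u i z) with hv
  -- Memℒp of v
  have hvm : AEStronglyMeasurable v μ := by
    have : ∀ i, AEMeasurable (u i) μ := fun i => (hu i).aestronglyMeasurable.aemeasurable
    have hmk : Measurable (fun z => (fun i => (this i).mk _ z : Fin n → ℝ)) :=
      measurable_pi_iff.2 fun i => (this i).measurable_mk
    refine (AEMeasurable.aestronglyMeasurable ⟨_, hmk, ?_⟩)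
    filter_upwards [MeasureTheory.ae_all_iff.2 fun i => (this i).ae_eq_mk] with z hz
    funext i; exact hz i
  have hvLp : MemLp v p μ := by
    refine (memLp_finset_sum Finset.univ (f := fun i z => |u i z|) (fun i _ => (hu i).abs)).mono
      hvm ?_
    filter_upwards with z
    rw [Real.norm_eq_abs, abs_of_nonneg (Finset.sum_nonneg fun i _ => abs_nonneg _)]
    refine (pi_norm_le_iff_of_nonneg (Finset.sum_nonneg fun i _ => abs_nonneg _)).2 fun i => ?_
    exact Finset.single_le_sum (f := fun j => |u j z|) (fun j _ => abs_nonneg _)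
      (Finset.mem_univ i)
  -- properties of the sup
  set ρu : Z → ℝ := fun z => ⨆ i, ρ i z with hρu
  have hρnn : ∀ i z, 0 ≤ ρ i z := fun i => (hρ i).1.2.1
  have hρum : Measurable ρu := Measurable.iSup fun i => (hρ i).1.1
  have hρunn : ∀ z, 0 ≤ ρu z := fun z => Real.iSup_nonneg fun i => hρnn i z
  have hle : ∀ i z, ρ i z ≤ ρu z := fun i z =>
    le_ciSup (Set.Finite.bddAbove (Set.finite_range fun j => ρ j z)) i
  have hρuLp : MemLp ρu p μ := by
    refine (memLp_finset_sum Finset.univ (f := fun i z => ρ i z)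
      (fun i _ => (hρ i).2.1)).mono hρum.aestronglyMeasurable ?_
    filter_upwards with z
    rw [Real.norm_eq_abs, abs_of_nonneg (hρunn z)]
    have : ρu z ≤ ∑ i, ρ i z :=
      Real.iSup_le (fun i => Finset.single_le_sum (fun j _ => hρnn j z) (Finset.mem_univ i))
        (Finset.sum_nonneg fun i _ => hρnn i z)
    exact this.trans (le_abs_self _)
  -- ρu is a weak upper gradient of v
  have hwug : IsWeakUpperGradient μ p v ρu := by
    refine ⟨hρum, hρunn, ?_⟩
    refine pneg_mono ?_ (pneg_iUnion (Γ := fun i =>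
      {γ : UnitSpeedPath Z | ¬ ENNReal.ofReal ‖u i (γ.toFun γ.a) - u i (γ.toFun γ.b)‖ ≤
        γ.integral (ρ i)}) fun i => (hρ i).1.2.2)
    intro γ hγ
    by_contra hγ'
    apply hγ
    simp only [Set.mem_iUnion, Set.mem_setOf_eq, not_exists, not_not] at hγ'
    have hbound : ∀ i, ENNReal.ofReal ‖u i (γ.toFun γ.a) - u i (γ.toFun γ.b)‖ ≤
        γ.integral ρu := fun i => (hγ' i).trans (usp_integral_mono γ (hle i))
    rcases eq_top_or_lt_top (γ.integral ρu) with h | h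
    · rw [h]; exact le_top
    · have hne := h.ne
      rw [ENNReal.ofReal_le_iff_le_toReal hne]
      refine (pi_norm_le_iff_of_nonneg ENNReal.toReal_nonneg).2 fun i => ?_
      have := (ENNReal.ofReal_le_iff_le_toReal hne).1 (hbound i)
      simpa using this
  refine ⟨hvLp, ρu, ⟨hwug, hρuLp, ?_⟩, Filter.EventuallyEq.rfl⟩
  -- minimality
  intro σ hσ hσLp
  have hcomp : ∀ i, ∀ᵐ z ∂μ, ρ i z ≤ σ z := by
    intro i
    refine (hρ i).2.2 σ ⟨hσ.1, hσ.2.1, pneg_mono ?_ hσ.2.2⟩ hσLp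
    intro γ hγ hγ'
    apply hγ
    have : ‖u i (γ.toFun γ.a) - u i (γ.toFun γ.b)‖ ≤ ‖v (γ.toFun γ.a) - v (γ.toFun γ.b)‖ := by
      have := norm_le_pi_norm (v (γ.toFun γ.a) - v (γ.toFun γ.b)) i
      simpa [hv] using this
    exact le_trans (ENNReal.ofReal_le_ofReal this) hγ'
  filter_upwards [MeasureTheory.ae_all_iff.2 hcomp] with z hz
  exact Real.iSup_le (fun i => hz i) (hσ.2.1 z)
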